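/- Let (rᵢⱼ) be an (n−1)×(n−1) Hermitian positive semidefinite matrix with eigenvalues λ₁ ≤ ⋯ ≤ λ_{n−1}. For every 1 ≤ q ≤ n−1 and every alternating array (u_J) of complex numbers indexed by strictly increasing multi-indices J ⊆ {1,…,n−1} of length k ≥ q, one has Σ'_{|K|=k−1} Σ_{i,j} rᵢⱼ u_{iK} \overline{u_{jK}} ≥ (Σ_{j=1}^{q} λⱼ) · Σ'_{|J|=k} |u_J|², where u_{iK} is the alternating extension of u. -/

import Mathlib

open Finset Matrix

open scoped Classical in
lemma alt_zero {N m : ℕ} (u : (Fin N → Fin m) → ℂ)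
    (halt : ∀ (σ : Equiv.Perm (Fin N)) (J : Fin N → Fin m),
      u (J ∘ σ) = ((Equiv.Perm.sign σ : ℤ) : ℂ) * u J)
    {J : Fin N → Fin m} (hJ : ¬ Function.Injective J) : u J = 0 := by
  simp only [Function.Injective, not_forall] at hJ
  obtain ⟨a, b, hab, hne⟩ := hJ
  have h1 := halt (Equiv.swap a b) J
  have hJs : J ∘ (Equiv.swap a b) = J := by
    funext x
    rcases eq_or_ne x a with rfl | hxa
    · simp [Equiv.swap_apply_left, hab]
    rcases eq_or_ne x b with rfl | hxb
    · simp [Equiv.swap_apply_right, hab]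
    · simp [Equiv.swap_apply_of_ne_of_ne hxa hxb]
  rw [hJs, Equiv.Perm.sign_swap hne] at h1
  simp only [Units.val_neg, Units.val_one, Int.cast_neg, Int.cast_one, neg_mul, one_mul] at h1
  linear_combination h1 / 2

open scoped Classical in
noncomputable def permEquiv (N m : ℕ) :
    Equiv.Perm (Fin N) × {J : Fin N → Fin m // StrictMono J} ≃
      {J : Fin N → Fin m // Function.Injective J} := by
  apply Equiv.ofBijective
    (fun x => ⟨x.2.1 ∘ x.1, x.2.2.injective.comp x.1.injective⟩)
  constructor
  · rintro ⟨σ₁, J₁, hJ₁⟩ ⟨σ₂, J₂, hJ₂⟩ h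
    simp only [Subtype.mk_eq_mk] at h
    have hr : Set.range (J₁ ∘ σ₁) = Set.range (J₂ ∘ σ₂) := by rw [h]
    rw [σ₁.surjective.range_comp, σ₂.surjective.range_comp] at hr
    have hJ : J₁ = J₂ := (hJ₁.range_inj hJ₂).1 hr
    subst hJ
    have hσ : σ₁ = σ₂ := by
      ext i
      exact congrArg Fin.val (hJ₁.injective (congrFun h i))
    simp [hσ]
  · rintro ⟨J, hJ⟩
    set s : Finset (Fin m) := Finset.image J Finset.univ with hs
    have hcard : s.card = N := by
      rw [hs, Finset.card_image_of_injective _ hJ, card_univ, Fintype.card_fin]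
    set g : Fin N → Fin m := ⇑(s.orderEmbOfFin hcard) with hg
    have hgm : StrictMono g := (s.orderEmbOfFin hcard).strictMono
    have hmem : ∀ i, J i ∈ Set.range g := by
      intro i
      rw [hg, Finset.range_orderEmbOfFin]
      exact Finset.mem_coe.2 (Finset.mem_image_of_mem J (Finset.mem_univ i))
    choose σ0 hσ0 using hmem
    have hσ0i : Function.Injective σ0 := by
      intro a b hab
      apply hJ
      rw [← hσ0 a, ← hσ0 b, hab]
    refine ⟨⟨Equiv.ofBijective σ0 (Finite.injective_iff_bijective.mp hσ0i), ⟨g, hgm⟩⟩, ?_⟩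
    ext i
    exact congrArg Fin.val (hσ0 i)

open scoped Classical in
lemma sum_eq_factorial_smul {N m : ℕ} {M : Type*} [AddCommMonoid M] (f : (Fin N → Fin m) → M)
    (hsymm : ∀ (σ : Equiv.Perm (Fin N)) (J : Fin N → Fin m), f (J ∘ σ) = f J)
    (hzero : ∀ J : Fin N → Fin m, ¬ Function.Injective J → f J = 0) :
    ∑ J, f J = N.factorial • ∑ J, if StrictMono J then f J else 0 := by
  have h1 : ∑ J, f J = ∑ J : {J : Fin N → Fin m // Function.Injective J}, f J.1 := by
    rw [← Finset.sum_filter_add_sum_filter_not Finset.univ (fun J => Function.Injective J) f,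
      Finset.sum_eq_zero (fun J hJ => hzero J (Finset.mem_filter.1 hJ).2), add_zero]
    exact Finset.sum_subtype _ (by simp) f
  have h2 : ∑ J : Fin N → Fin m, (if StrictMono J then f J else 0)
      = ∑ J : {J : Fin N → Fin m // StrictMono J}, f J.1 := by
    rw [← Finset.sum_filter]
    exact Finset.sum_subtype _ (by simp) f
  rw [h1, h2, ← Fintype.sum_equiv (permEquiv N m) _ (fun J => f J.1) (fun x => rfl)]
  rw [Fintype.sum_prod_type]
  have h3 : ∀ σ : Equiv.Perm (Fin N),
      ∑ J : {J : Fin N → Fin m // StrictMono J}, f (((permEquiv N m) (σ, J)).1)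
        = ∑ J : {J : Fin N → Fin m // StrictMono J}, f J.1 := by
    intro σ
    refine Finset.sum_congr rfl fun J _ => ?_
    have : ((permEquiv N m) (σ, J)).1 = J.1 ∘ σ := rfl
    rw [this, hsymm]
  simp_rw [h3]
  rw [Finset.sum_const, card_univ, Fintype.card_perm, Fintype.card_fin]

open scoped Classical in
lemma tensor_unitary {N m : ℕ} (U : Matrix (Fin m) (Fin m) ℂ) (hU : U * Uᴴ = 1)
    (x y : (Fin N → Fin m) → ℂ) :
    ∑ P : Fin N → Fin m, (∑ K, (∏ l, U (K l) (P l)) * x K) *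
        (starRingEnd ℂ) (∑ K, (∏ l, U (K l) (P l)) * y K)
      = ∑ K, x K * (starRingEnd ℂ) (y K) := by
  have key : ∀ K K' : Fin N → Fin m,
      ∑ P : Fin N → Fin m, (∏ l, U (K l) (P l)) * (starRingEnd ℂ) (∏ l, U (K' l) (P l))
        = if K = K' then 1 else 0 := by
    intro K K'
    have h1 : ∀ P : Fin N → Fin m, (∏ l, U (K l) (P l)) * (starRingEnd ℂ) (∏ l, U (K' l) (P l))
        = ∏ l, (U (K l) (P l) * (starRingEnd ℂ) (U (K' l) (P l))) := by
      intro P; rw [map_prod, ← Finset.prod_mul_distrib]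
    simp_rw [h1]
    have h2 := Finset.prod_univ_sum (fun _ : Fin N => (Finset.univ : Finset (Fin m)))
      (fun l p => U (K l) p * (starRingEnd ℂ) (U (K' l) p))
    rw [Fintype.piFinset_univ] at h2
    rw [← h2]
    have h3 : ∀ l : Fin N, ∑ p, U (K l) p * (starRingEnd ℂ) (U (K' l) p)
        = if K l = K' l then 1 else 0 := by
      intro l
      have : ∑ p, U (K l) p * (starRingEnd ℂ) (U (K' l) p) = (U * Uᴴ) (K l) (K' l) := by
        rw [Matrix.mul_apply]
        exact Finset.sum_congr rfl fun p _ => by rw [Matrix.conjTranspose_apply, RCLike.star_def]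
      rw [this, hU, Matrix.one_apply]
    simp_rw [h3]
    rw [Finset.prod_boole]
    congr 1
    simp [funext_iff]
  have step1 : ∑ P : Fin N → Fin m, (∑ K, (∏ l, U (K l) (P l)) * x K) *
        (starRingEnd ℂ) (∑ K, (∏ l, U (K l) (P l)) * y K)
      = ∑ K, ∑ K', (x K * (starRingEnd ℂ) (y K')) *
        ∑ P : Fin N → Fin m, (∏ l, U (K l) (P l)) * (starRingEnd ℂ) (∏ l, U (K' l) (P l)) := by
    simp_rw [map_sum, _root_.map_mul, Finset.sum_mul_sum, Finset.mul_sum]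
    rw [Finset.sum_comm]
    refine Finset.sum_congr rfl fun K _ => ?_
    rw [Finset.sum_comm]
    refine Finset.sum_congr rfl fun K' _ => ?_
    refine Finset.sum_congr rfl fun P _ => ?_
    ring
  rw [step1]
  simp_rw [key]
  simp [mul_ite, Finset.sum_ite_eq]

lemma strictMono_le_apply {N m : ℕ} {f : Fin N → Fin m} (hf : StrictMono f) (j : Fin N) :
    (j : ℕ) ≤ (f j : ℕ) := by
  obtain ⟨v, hv⟩ := j
  induction v with
  | zero => exact Nat.zero_le _
  | succ i ih =>
    have hiN : i < N := Nat.lt_of_succ_lt hv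
    have h1 : f ⟨i, hiN⟩ < f ⟨i + 1, hv⟩ := hf (by simp [Fin.lt_def])
    have h2 := ih hiN
    have h3 : (f ⟨i, hiN⟩ : ℕ) < (f ⟨i + 1, hv⟩ : ℕ) := h1
    have e1 : ((⟨i, hiN⟩ : Fin N) : ℕ) = i := rfl
    have e2 : ((⟨i + 1, hv⟩ : Fin N) : ℕ) = i + 1 := rfl
    omega

open scoped Classical in
lemma sorted_min_sum {m q N : ℕ} (lam : Fin m → ℝ) (hmono : Monotone lam)
    (hnn : ∀ j, 0 ≤ lam j) (hqm : q ≤ m) (hqN : q ≤ N) (T : Fin N → Fin m)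
    (hT : Function.Injective T) :
    ∑ j ∈ Finset.univ.filter (fun j : Fin m => (j : ℕ) < q), lam j ≤ ∑ l, lam (T l) := by
  set s : Finset (Fin m) := Finset.image T Finset.univ with hs
  have hcard : s.card = N := by
    rw [hs, Finset.card_image_of_injective _ hT, card_univ, Fintype.card_fin]
  set f : Fin N → Fin m := ⇑(s.orderEmbOfFin hcard) with hf
  have hfm : StrictMono f := (s.orderEmbOfFin hcard).strictMono
  have step1 : ∑ j ∈ Finset.univ.filter (fun j : Fin m => (j : ℕ) < q), lam j
      = ∑ a : Fin q, lam (Fin.castLE hqm a) := by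
    refine (Finset.sum_bij (fun (a : Fin q) _ => Fin.castLE hqm a) ?_ ?_ ?_ ?_).symm
    · intro a _
      simp [Fin.castLE]
    · intro a _ b _ hab
      exact Fin.castLE_injective hqm hab
    · intro b hb
      have hbq : (b : ℕ) < q := (Finset.mem_filter.1 hb).2
      exact ⟨⟨(b : ℕ), hbq⟩, Finset.mem_univ _, by simp [Fin.castLE]⟩
    · intro a _; rfl
  have step2 : ∑ a : Fin q, lam (Fin.castLE hqm a)
      ≤ ∑ a : Fin q, lam (f (Fin.castLE hqN a)) := by
    refine Finset.sum_le_sum fun a _ => hmono ?_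
    rw [Fin.le_def]
    simpa using strictMono_le_apply hfm (Fin.castLE hqN a)
  have step3 : ∑ a : Fin q, lam (f (Fin.castLE hqN a)) ≤ ∑ l : Fin N, lam (f l) := by
    have himg := Finset.sum_image (s := (Finset.univ : Finset (Fin q)))
      (g := Fin.castLE hqN) (f := fun l => lam (f l))
      (fun x _ y _ h => Fin.castLE_injective hqN h)
    rw [← himg]
    exact Finset.sum_le_sum_of_subset_of_nonneg (Finset.subset_univ _) fun _ _ _ => hnn _
  have step4 : ∑ l : Fin N, lam (f l) = ∑ i ∈ s, lam i := by
    have himg := Finset.sum_image (s := (Finset.univ : Finset (Fin N)))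
      (g := f) (f := lam) (fun x _ y _ h => hfm.injective h)
    rw [← himg]
    congr 1
    apply Finset.coe_injective
    rw [Finset.coe_image, Finset.coe_univ, Set.image_univ, hf, Finset.range_orderEmbOfFin]
  have step5 : ∑ i ∈ s, lam i = ∑ l, lam (T l) :=
    Finset.sum_image (fun x _ y _ h => hT h)
  linarith

lemma sum_comp_perm {N m : ℕ} {M : Type*} [AddCommMonoid M] (σ : Equiv.Perm (Fin N))
    (f : (Fin N → Fin m) → M) :
    ∑ I : Fin N → Fin m, f (I ∘ σ) = ∑ I : Fin N → Fin m, f I :=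
  Equiv.sum_comp (⟨fun I : Fin N → Fin m => I ∘ σ, fun I => I ∘ σ.symm,
    fun I => by funext l; simp, fun I => by funext l; simp⟩ :
      (Fin N → Fin m) ≃ (Fin N → Fin m)) f
open scoped Classical ComplexOrder in
/-- The Levi form acting on alternating arrays indexed by increasing
multi-indices of length `k+1 ≥ q` is bounded below by the sum of the `q`
smallest eigenvalues times the squared norm of the array. -/
theorem stmt_4 {m k q : ℕ} (hq1 : 1 ≤ q) (hqm : q ≤ m) (hqk : q ≤ k + 1)
    (r : Matrix (Fin m) (Fin m) ℂ) (hr : r.IsHermitian) (hpsd : r.PosSemidef)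
    (lam : Fin m → ℝ) (hmono : Monotone lam)
    (hperm : ∃ σ : Equiv.Perm (Fin m), lam = hr.eigenvalues ∘ σ)
    (u : (Fin (k + 1) → Fin m) → ℂ)
    (halt : ∀ (σ : Equiv.Perm (Fin (k + 1))) (J : Fin (k + 1) → Fin m),
      u (J ∘ σ) = ((Equiv.Perm.sign σ : ℤ) : ℂ) * u J) :
    (∑ j ∈ Finset.univ.filter fun j : Fin m => (j : ℕ) < q, lam j) *
        ∑ J : Fin (k + 1) → Fin m, (if StrictMono J then ‖u J‖ ^ 2 else 0)
      ≤ (∑ K : Fin k → Fin m, if StrictMono K then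
          ∑ i : Fin m, ∑ j : Fin m,
            r i j * u (Fin.cons i K) * star (u (Fin.cons j K)) else 0).re := by
  obtain ⟨σp, hσp⟩ := hperm
  set lamE : Fin m → ℝ := hr.eigenvalues with hlamE
  set U : Matrix (Fin m) (Fin m) ℂ :=
    (Matrix.IsHermitian.eigenvectorUnitary hr : Matrix (Fin m) (Fin m) ℂ) with hUdef
  have hUU : U * Uᴴ = 1 := by
    have h := (Matrix.IsHermitian.eigenvectorUnitary hr).2
    rw [Matrix.mem_unitaryGroup_iff] at h
    rw [hUdef, ← Matrix.star_eq_conjTranspose]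
    exact h
  have entry : ∀ i j, r i j = ∑ p, U i p * ((lamE p : ℝ) : ℂ) * (starRingEnd ℂ) (U j p) := by
    intro i j
    nth_rewrite 1 [hr.spectral_theorem]
    rw [Unitary.conjStarAlgAut_apply]
    rw [Matrix.mul_apply]
    refine Finset.sum_congr rfl fun p _ => ?_
    rw [Matrix.mul_diagonal, Matrix.star_apply]
    simp [hUdef, RCLike.star_def, hlamE]
    try ring
  -- the transformed array
  set w : (Fin (k + 1) → Fin m) → ℂ :=
    fun P => ∑ I : Fin (k + 1) → Fin m, (∏ l, U (I l) (P l)) * u I with hw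
  set a : Fin m → (Fin k → Fin m) → ℂ :=
    fun p K => ∑ i, U i p * u (Fin.cons i K) with ha
  have signnorm : ∀ {n : ℕ} (σ : Equiv.Perm (Fin n)),
      ‖((Equiv.Perm.sign σ : ℤ) : ℂ)‖ = 1 := by
    intro n σ
    rcases Int.units_eq_one_or (Equiv.Perm.sign σ) with h | h <;> simp [h]
  have walt : ∀ (σ : Equiv.Perm (Fin (k + 1))) (J : Fin (k + 1) → Fin m),
      w (J ∘ σ) = ((Equiv.Perm.sign σ : ℤ) : ℂ) * w J := by
    intro σ J
    have h1 : w (J ∘ σ)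
        = ∑ I : Fin (k + 1) → Fin m, (∏ l, U ((I ∘ σ) l) ((J ∘ σ) l)) * u (I ∘ σ) :=
      (sum_comp_perm σ (fun I => (∏ l, U (I l) ((J ∘ σ) l)) * u I)).symm
    rw [h1]
    have h2 : ∀ I : Fin (k + 1) → Fin m,
        (∏ l, U ((I ∘ σ) l) ((J ∘ σ) l)) * u (I ∘ σ)
          = ((Equiv.Perm.sign σ : ℤ) : ℂ) * ((∏ l, U (I l) (J l)) * u I) := by
      intro I
      have hprod : (∏ l, U ((I ∘ σ) l) ((J ∘ σ) l)) = ∏ l, U (I l) (J l) := by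
        have h3 := Equiv.prod_comp σ (fun l => U (I l) (J l))
        rw [← h3]
        rfl
      have hu : u (I ∘ σ) = ((Equiv.Perm.sign σ : ℤ) : ℂ) * u I := halt σ I
      rw [hprod, hu]
      ring
    simp_rw [h2]
    rw [← Finset.mul_sum, hw]
  have wnorm : ∀ (σ : Equiv.Perm (Fin (k + 1))) (J : Fin (k + 1) → Fin m),
      ‖w (J ∘ σ)‖ = ‖w J‖ := by
    intro σ J
    rw [walt σ J, norm_mul, signnorm, one_mul]
  have unorm : ∀ (σ : Equiv.Perm (Fin (k + 1))) (J : Fin (k + 1) → Fin m),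
      ‖u (J ∘ σ)‖ = ‖u J‖ := by
    intro σ J
    rw [halt σ J, norm_mul, signnorm, one_mul]
  -- the quadratic form
  set Q : (Fin k → Fin m) → ℂ := fun K => ∑ i, ∑ j,
    r i j * u (Fin.cons i K) * (starRingEnd ℂ) (u (Fin.cons j K)) with hQ
  have cons_ni : ∀ (i : Fin m) (K : Fin k → Fin m), ¬Function.Injective K →
      ¬Function.Injective (Fin.cons i K) := by
    intro i K hK h
    apply hK
    intro x y hxy
    have h2 : (Fin.cons i K : Fin (k + 1) → Fin m) x.succ
        = (Fin.cons i K : Fin (k + 1) → Fin m) y.succ := by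
      rw [Fin.cons_succ, Fin.cons_succ]
      exact hxy
    exact Fin.succ_injective _ (h h2)
  have Qsymm : ∀ (σ : Equiv.Perm (Fin k)) (K : Fin k → Fin m), Q (K ∘ σ) = Q K := by
    intro σ K
    set π : Equiv.Perm (Fin (k + 1)) := Equiv.Perm.decomposeFin.symm (0, σ) with hπ
    have hcons : ∀ i : Fin m, Fin.cons i (K ∘ σ) = (Fin.cons i K) ∘ π := by
      intro i
      funext l
      refine Fin.cases ?_ ?_ l
      · simp [hπ, Equiv.Perm.decomposeFin_symm_apply_zero]
      · intro l'
        simp [hπ, Equiv.Perm.decomposeFin_symm_apply_succ]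
    rw [hQ]
    simp only [hcons, halt]
    refine Finset.sum_congr rfl fun i _ => Finset.sum_congr rfl fun j _ => ?_
    rw [_root_.map_mul]
    rcases Int.units_eq_one_or (Equiv.Perm.sign π) with h | h <;>
      simp [h] <;> ring
  have Qzero : ∀ K : Fin k → Fin m, ¬Function.Injective K → Q K = 0 := by
    intro K hK
    have h0 : ∀ i, u (Fin.cons i K) = 0 := fun i => alt_zero u halt (cons_ni i K hK)
    simp [hQ, h0]
  -- expansion of Q in eigencoordinates
  have expand : ∀ (p : Fin m) (K : Fin k → Fin m),
      ((lamE p : ℝ) : ℂ) * (a p K * (starRingEnd ℂ) (a p K))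
        = ∑ i, ∑ j, (U i p * ((lamE p : ℝ) : ℂ) * (starRingEnd ℂ) (U j p))
            * u (Fin.cons i K) * (starRingEnd ℂ) (u (Fin.cons j K)) := by
    intro p K
    rw [show a p K = ∑ i, U i p * u (Fin.cons i K) from rfl]
    rw [map_sum, Finset.sum_mul_sum, Finset.mul_sum]
    refine Finset.sum_congr rfl fun i _ => ?_
    rw [Finset.mul_sum]
    refine Finset.sum_congr rfl fun j _ => ?_
    rw [_root_.map_mul]
    ring
  have claim2i : ∀ K : Fin k → Fin m,
      Q K = ∑ p, ((lamE p : ℝ) : ℂ) * (a p K * (starRingEnd ℂ) (a p K)) := by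
    intro K
    rw [hQ]
    simp only []
    calc ∑ i, ∑ j, r i j * u (Fin.cons i K) * (starRingEnd ℂ) (u (Fin.cons j K))
        = ∑ i, ∑ j, ∑ p, (U i p * ((lamE p : ℝ) : ℂ) * (starRingEnd ℂ) (U j p))
            * u (Fin.cons i K) * (starRingEnd ℂ) (u (Fin.cons j K)) := by
          simp_rw [entry, Finset.sum_mul]
      _ = ∑ i, ∑ p, ∑ j, (U i p * ((lamE p : ℝ) : ℂ) * (starRingEnd ℂ) (U j p))
            * u (Fin.cons i K) * (starRingEnd ℂ) (u (Fin.cons j K)) :=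
          Finset.sum_congr rfl fun i _ => Finset.sum_comm
      _ = ∑ p, ∑ i, ∑ j, (U i p * ((lamE p : ℝ) : ℂ) * (starRingEnd ℂ) (U j p))
            * u (Fin.cons i K) * (starRingEnd ℂ) (u (Fin.cons j K)) := Finset.sum_comm
      _ = ∑ p, ((lamE p : ℝ) : ℂ) * (a p K * (starRingEnd ℂ) (a p K)) :=
          Finset.sum_congr rfl fun p _ => (expand p K).symm
  have lemB : ∀ (p : Fin m) (P : Fin k → Fin m),
      w (Fin.cons p P) = ∑ K : Fin k → Fin m, (∏ l, U (K l) (P l)) * (a p K) := by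
    intro p P
    rw [hw]
    simp only []
    have h1 : ∑ I : Fin (k + 1) → Fin m, (∏ l, U (I l) ((Fin.cons p P : Fin (k + 1) → Fin m) l)) * u I
        = ∑ y : Fin m × (Fin k → Fin m),
            (∏ l, U ((Fin.cons y.1 y.2 : Fin (k + 1) → Fin m) l)
              ((Fin.cons p P : Fin (k + 1) → Fin m) l)) * u (Fin.cons y.1 y.2) := by
      rw [← Equiv.sum_comp (Fin.consEquiv (fun _ : Fin (k + 1) => Fin m))
        (fun I => (∏ l, U (I l) ((Fin.cons p P : Fin (k + 1) → Fin m) l)) * u I)]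
      rfl
    rw [h1, Fintype.sum_prod_type]
    have h2 : ∀ (i : Fin m) (K : Fin k → Fin m),
        (∏ l, U ((Fin.cons i K : Fin (k + 1) → Fin m) l)
          ((Fin.cons p P : Fin (k + 1) → Fin m) l)) = U i p * ∏ l, U (K l) (P l) := by
      intro i K
      rw [Fin.prod_univ_succ]
      simp
    calc ∑ i, ∑ K : Fin k → Fin m,
          (∏ l, U ((Fin.cons i K : Fin (k + 1) → Fin m) l)
            ((Fin.cons p P : Fin (k + 1) → Fin m) l)) * u (Fin.cons i K)
        = ∑ K : Fin k → Fin m, ∑ i,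
          (U i p * ∏ l, U (K l) (P l)) * u (Fin.cons i K) := by
          simp_rw [h2]; exact Finset.sum_comm
      _ = ∑ K : Fin k → Fin m, (∏ l, U (K l) (P l)) * (a p K) := by
          refine Finset.sum_congr rfl fun K _ => ?_
          rw [show a p K = ∑ i, U i p * u (Fin.cons i K) from rfl, Finset.mul_sum]
          refine Finset.sum_congr rfl fun i _ => ?_
          ring
  have claim2ii : ∀ p : Fin m,
      ∑ K : Fin k → Fin m, a p K * (starRingEnd ℂ) (a p K)
        = ∑ P : Fin k → Fin m, w (Fin.cons p P) * (starRingEnd ℂ) (w (Fin.cons p P)) := by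
    intro p
    rw [← tensor_unitary U hUU (a p) (a p)]
    refine Finset.sum_congr rfl fun P _ => ?_
    rw [lemB p P]
  -- assemble the total quadratic sum
  have chain : ∑ K : Fin k → Fin m, Q K
      = ∑ J : Fin (k + 1) → Fin m, ((lamE (J 0) : ℝ) : ℂ) * (w J * (starRingEnd ℂ) (w J)) := by
    calc ∑ K : Fin k → Fin m, Q K
        = ∑ K : Fin k → Fin m, ∑ p, ((lamE p : ℝ) : ℂ) * (a p K * (starRingEnd ℂ) (a p K)) :=
          Finset.sum_congr rfl fun K _ => claim2i K
      _ = ∑ p, ∑ K : Fin k → Fin m, ((lamE p : ℝ) : ℂ) * (a p K * (starRingEnd ℂ) (a p K)) :=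
          Finset.sum_comm
      _ = ∑ p, ((lamE p : ℝ) : ℂ) * ∑ K : Fin k → Fin m, a p K * (starRingEnd ℂ) (a p K) := by
          simp_rw [Finset.mul_sum]
      _ = ∑ p, ((lamE p : ℝ) : ℂ)
            * ∑ P : Fin k → Fin m, w (Fin.cons p P) * (starRingEnd ℂ) (w (Fin.cons p P)) := by
          simp_rw [claim2ii]
      _ = ∑ J : Fin (k + 1) → Fin m, ((lamE (J 0) : ℝ) : ℂ) * (w J * (starRingEnd ℂ) (w J)) := by
          rw [← Equiv.sum_comp (Fin.consEquiv (fun _ : Fin (k + 1) => Fin m))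
            (fun J => ((lamE (J 0) : ℝ) : ℂ) * (w J * (starRingEnd ℂ) (w J))),
            Fintype.sum_prod_type]
          refine Finset.sum_congr rfl fun p _ => ?_
          rw [Finset.mul_sum]
          rfl
  have mulconj : ∀ z : ℂ, z * (starRingEnd ℂ) z = ((‖z‖ ^ 2 : ℝ) : ℂ) := by
    intro z
    rw [Complex.mul_conj, Complex.normSq_eq_norm_sq]
  set T : ℝ := ∑ J : Fin (k + 1) → Fin m, lamE (J 0) * ‖w J‖ ^ 2 with hT
  have chainT : ∑ K : Fin k → Fin m, Q K = ((T : ℝ) : ℂ) := by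
    rw [chain, hT]
    push_cast
    refine Finset.sum_congr rfl fun J _ => ?_
    rw [mulconj]
    push_cast
    ring
  -- relate to the goal's RHS
  have hTot : ∑ K : Fin k → Fin m, Q K
      = k.factorial • ∑ K : Fin k → Fin m, (if StrictMono K then Q K else 0) :=
    sum_eq_factorial_smul Q Qsymm Qzero
  have hgoalQ : (∑ K : Fin k → Fin m, if StrictMono K then
      ∑ i : Fin m, ∑ j : Fin m,
        r i j * u (Fin.cons i K) * star (u (Fin.cons j K)) else 0)
      = ∑ K : Fin k → Fin m, (if StrictMono K then Q K else 0) := rfl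
  have hS : (k.factorial : ℝ) * (∑ K : Fin k → Fin m, (if StrictMono K then Q K else 0)).re
      = T := by
    have h := congrArg Complex.re (hTot.symm.trans chainT)
    rw [nsmul_eq_mul] at h
    simpa [Complex.mul_re] using h
  -- the symmetrization over positions
  have hswap : ∀ l : Fin (k + 1),
      ∑ J : Fin (k + 1) → Fin m, lamE (J l) * ‖w J‖ ^ 2 = T := by
    intro l
    set τ : Equiv.Perm (Fin (k + 1)) := Equiv.swap 0 l with hτ
    rw [hT]
    rw [← sum_comp_perm τ (fun J => lamE (J 0) * ‖w J‖ ^ 2)]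
    refine Finset.sum_congr rfl fun J _ => ?_
    have h1 : (J ∘ τ) 0 = J l := by
      show J (τ 0) = J l
      rw [hτ, Equiv.swap_apply_left]
    have h2 : ‖w (J ∘ τ)‖ = ‖w J‖ := wnorm τ J
    rw [h1, h2]
  have hkT : ∑ J : Fin (k + 1) → Fin m, (∑ l, lamE (J l)) * ‖w J‖ ^ 2
      = ((k : ℝ) + 1) * T := by
    simp_rw [Finset.sum_mul]
    rw [Finset.sum_comm]
    simp_rw [hswap]
    rw [Finset.sum_const, Finset.card_univ, Fintype.card_fin, nsmul_eq_mul]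
    push_cast
    ring
  have hlam_nn : ∀ j, 0 ≤ lam j := by
    intro j
    rw [hσp]
    exact hpsd.eigenvalues_nonneg _
  have hlamE_nn : ∀ p, 0 ≤ lamE p := fun p => hpsd.eigenvalues_nonneg _
  set Slam : ℝ := ∑ j ∈ Finset.univ.filter fun j : Fin m => (j : ℕ) < q, lam j with hSlam
  have hpoint : ∀ J : Fin (k + 1) → Fin m,
      Slam * ‖w J‖ ^ 2 ≤ (∑ l, lamE (J l)) * ‖w J‖ ^ 2 := by
    intro J
    by_cases hJ : Function.Injective J
    · refine mul_le_mul_of_nonneg_right ?_ (by positivity)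
      have hrw : ∀ l, lamE (J l) = lam (σp.symm (J l)) := by
        intro l
        rw [hσp]
        simp
      simp_rw [hrw]
      exact sorted_min_sum lam hmono hlam_nn hqm hqk (fun l => σp.symm (J l))
        (fun x y h => hJ (σp.symm.injective h))
    · rw [alt_zero w walt hJ]
      simp
  have hsum_ge : Slam * ∑ J : Fin (k + 1) → Fin m, ‖w J‖ ^ 2
      ≤ ∑ J : Fin (k + 1) → Fin m, (∑ l, lamE (J l)) * ‖w J‖ ^ 2 := by
    rw [Finset.mul_sum]
    exact Finset.sum_le_sum fun J _ => hpoint J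
  have hwu : ∑ J : Fin (k + 1) → Fin m, ‖w J‖ ^ 2
      = ∑ J : Fin (k + 1) → Fin m, ‖u J‖ ^ 2 := by
    have h := tensor_unitary U hUU u u
    have h2 := congrArg Complex.re h
    rw [Complex.re_sum, Complex.re_sum] at h2
    calc ∑ J : Fin (k + 1) → Fin m, ‖w J‖ ^ 2
        = ∑ J : Fin (k + 1) → Fin m, (w J * (starRingEnd ℂ) (w J)).re := by
          refine Finset.sum_congr rfl fun J _ => ?_
          rw [mulconj, Complex.ofReal_re]
      _ = ∑ J : Fin (k + 1) → Fin m, (u J * (starRingEnd ℂ) (u J)).re := h2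
      _ = ∑ J : Fin (k + 1) → Fin m, ‖u J‖ ^ 2 := by
          refine Finset.sum_congr rfl fun J _ => ?_
          rw [mulconj, Complex.ofReal_re]
  have hfactA : ∑ J : Fin (k + 1) → Fin m, ‖u J‖ ^ 2
      = (k + 1).factorial • ∑ J : Fin (k + 1) → Fin m,
          (if StrictMono J then ‖u J‖ ^ 2 else 0) :=
    sum_eq_factorial_smul (fun J => ‖u J‖ ^ 2)
      (fun σ J => by show ‖u (J ∘ σ)‖ ^ 2 = ‖u J‖ ^ 2; rw [unorm σ J])
      (fun J hJ => by show ‖u J‖ ^ 2 = 0; rw [alt_zero u halt hJ]; simp)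
  -- final arithmetic
  set A : ℝ := ∑ J : Fin (k + 1) → Fin m, (if StrictMono J then ‖u J‖ ^ 2 else 0) with hA
  rw [hgoalQ]
  have hk1 : (0 : ℝ) < (k : ℝ) + 1 := by positivity
  have hkf : (0 : ℝ) < (k.factorial : ℝ) := by
    exact_mod_cast Nat.factorial_pos k
  have hfacts : ((k + 1).factorial : ℝ) = ((k : ℝ) + 1) * (k.factorial : ℝ) := by
    rw [Nat.factorial_succ]
    push_cast
    ring
  have key : ((k : ℝ) + 1) * (Slam * ((k.factorial : ℝ) * A)) ≤ ((k : ℝ) + 1) * T := by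
    calc ((k : ℝ) + 1) * (Slam * ((k.factorial : ℝ) * A))
        = Slam * (((k + 1).factorial : ℝ) * A) := by rw [hfacts]; ring
      _ = Slam * ∑ J : Fin (k + 1) → Fin m, ‖u J‖ ^ 2 := by
          rw [hfactA, nsmul_eq_mul, hA]
      _ = Slam * ∑ J : Fin (k + 1) → Fin m, ‖w J‖ ^ 2 := by rw [hwu]
      _ ≤ ∑ J : Fin (k + 1) → Fin m, (∑ l, lamE (J l)) * ‖w J‖ ^ 2 := hsum_ge
      _ = ((k : ℝ) + 1) * T := hkT
  have hTge : Slam * ((k.factorial : ℝ) * A) ≤ T := le_of_mul_le_mul_left key hk1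
  rw [← hS] at hTge
  have := le_of_mul_le_mul_left (by linarith [hTge] :
    (k.factorial : ℝ) * (Slam * A) ≤ (k.factorial : ℝ)
      * (∑ K : Fin k → Fin m, (if StrictMono K then Q K else 0)).re) hkf
  exact this
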